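/- Let r : ℤ → ℝ² be a nondegenerate discrete planar curve which is closed with period 6. Then the opposite sides of the hexagon are pairwise parallel and of equal length, i.e. t_{k+3} = −t_k for all k ∈ ℤ, if and only if for every n ∈ ℤ the centroaffine curvatures satisfy κ_n = κ_{n+3}, κ_n · κ̄_{n+1} = 1, and κ_n · κ_{n+1} · κ_{n+2} = 1. -/

import Mathlib

/-- Planar determinant of two vectors in ℝ². -/
def det2 (u v : Fin 2 → ℝ) : ℝ := u 0 * v 1 - u 1 * v 0

/-- Edge tangent vector of a discrete planar curve. -/
def tang2 (r : ℤ → Fin 2 → ℝ) (k : ℤ) : Fin 2 → ℝ := r (k + 1) - r k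

/-- Nondegeneracy of a discrete planar curve. -/
def Nondeg2 (r : ℤ → Fin 2 → ℝ) : Prop :=
  ∀ k : ℤ, det2 (tang2 r (k - 1)) (tang2 r k) ≠ 0

/-- First centroaffine curvature. -/
noncomputable def kappa2 (r : ℤ → Fin 2 → ℝ) (k : ℤ) : ℝ :=
  det2 (tang2 r k) (tang2 r (k + 1)) / det2 (tang2 r (k - 1)) (tang2 r k)

/-- Second centroaffine curvature. -/
noncomputable def kbar2 (r : ℤ → Fin 2 → ℝ) (k : ℤ) : ℝ :=
  det2 (tang2 r (k - 1)) (tang2 r (k + 1)) / det2 (tang2 r (k - 1)) (tang2 r k)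

lemma det2_neg_neg (u v : Fin 2 → ℝ) : det2 (-u) (-v) = det2 u v := by
  simp only [det2, Pi.neg_apply]; ring

lemma det2_neg_right (u v : Fin 2 → ℝ) : det2 u (-v) = -det2 u v := by
  simp only [det2, Pi.neg_apply]; ring

lemma det2_swap (u v : Fin 2 → ℝ) : det2 u v = -det2 v u := by
  simp only [det2]; ring

lemma det2_add_right (u v w : Fin 2 → ℝ) : det2 u (v + w) = det2 u v + det2 u w := by
  simp only [det2, Pi.add_apply]; ring

lemma det2_cramer {a b s : Fin 2 → ℝ} (hab : det2 a b ≠ 0)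
    (h1 : det2 a s = 0) (h2 : det2 b s = 0) : s = 0 := by
  have h0 : s 0 * det2 a b = 0 := by
    simp only [det2] at h1 h2 ⊢
    linear_combination b 0 * h1 - a 0 * h2
  have h1' : s 1 * det2 a b = 0 := by
    simp only [det2] at h1 h2 ⊢
    linear_combination b 1 * h1 - a 1 * h2
  have e0 : s 0 = 0 := (mul_eq_zero.mp h0).resolve_right hab
  have e1 : s 1 = 0 := (mul_eq_zero.mp h1').resolve_right hab
  funext i
  fin_cases i
  · exact e0
  · exact e1

/-- Characterization of hexagons with parallel, equi-length opposite sides by their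
centroaffine curvatures. -/
theorem stmt_12 (r : ℤ → Fin 2 → ℝ) (hr : Nondeg2 r)
    (hclosed : ∀ k : ℤ, r (k + 6) = r k) :
    (∀ k : ℤ, tang2 r (k + 3) = -tang2 r k) ↔
      ∀ n : ℤ, kappa2 r n = kappa2 r (n + 3) ∧
        kappa2 r n * kbar2 r (n + 1) = 1 ∧
        kappa2 r n * kappa2 r (n + 1) * kappa2 r (n + 2) = 1 := by
  have hd : ∀ m : ℤ, det2 (tang2 r m) (tang2 r (m + 1)) ≠ 0 := by
    intro m
    have := hr (m + 1)
    rwa [show m + 1 - 1 = m from by ring] at this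
  constructor
  · intro h n
    have ha := hr n
    have hb := hd n
    have hc : det2 (tang2 r (n + 1)) (tang2 r (n + 2)) ≠ 0 := by
      have := hd (n + 1)
      rwa [show n + 1 + 1 = n + 2 from by ring] at this
    have ht2 : tang2 r (n + 2) = -tang2 r (n - 1) := by
      have := h (n - 1)
      rwa [show n - 1 + 3 = n + 2 from by ring] at this
    refine ⟨?_, ?_, ?_⟩
    · simp only [kappa2]
      rw [show n + 3 + 1 = (n + 1) + 3 from by ring,
        show n + 3 - 1 = n + 2 from by ring,
        h n, h (n + 1), ht2, det2_neg_neg, det2_neg_neg]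
    · simp only [kappa2, kbar2]
      rw [show n + 1 - 1 = n from by ring, show n + 1 + 1 = n + 2 from by ring, ht2,
        det2_neg_right, ← det2_swap]
      field_simp
    · simp only [kappa2]
      rw [show n + 1 - 1 = n from by ring, show n + 1 + 1 = n + 2 from by ring,
        show n + 2 - 1 = n + 1 from by ring, show n + 2 + 1 = n + 3 from by ring,
        h n, ht2, det2_neg_neg, det2_neg_right]
      rw [ht2, det2_neg_right, neg_ne_zero] at hc
      field_simp
  · intro H k
    -- extract det equalities
    have hE : ∀ n : ℤ, det2 (tang2 r n) (tang2 r (n + 2)) = det2 (tang2 r (n - 1)) (tang2 r n) := by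
      intro n
      have h2 := (H n).2.1
      simp only [kappa2, kbar2] at h2
      rw [show n + 1 - 1 = n from by ring, show n + 1 + 1 = n + 2 from by ring] at h2
      have ha := hr n
      have hb := hd n
      field_simp at h2
      exact h2
    have hD : ∀ n : ℤ, det2 (tang2 r (n + 2)) (tang2 r (n + 3)) = det2 (tang2 r (n - 1)) (tang2 r n) := by
      intro n
      have h3 := (H n).2.2
      simp only [kappa2] at h3
      rw [show n + 1 - 1 = n from by ring, show n + 1 + 1 = n + 2 from by ring,
        show n + 2 - 1 = n + 1 from by ring, show n + 2 + 1 = n + 3 from by ring] at h3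
      have ha := hr n
      have hb := hd n
      have hc : det2 (tang2 r (n + 1)) (tang2 r (n + 2)) ≠ 0 := by
        have := hd (n + 1)
        rwa [show n + 1 + 1 = n + 2 from by ring] at this
      field_simp at h3
      exact h3
    -- show s := t k + t (k+3) = 0
    have h1 : det2 (tang2 r (k + 1)) (tang2 r k + tang2 r (k + 3)) = 0 := by
      rw [det2_add_right]
      have e1 := hE (k + 1)
      rw [show k + 1 + 2 = k + 3 from by ring, show k + 1 - 1 = k from by ring] at e1
      rw [e1, det2_swap]
      ring
    have h2 : det2 (tang2 r (k + 2)) (tang2 r k + tang2 r (k + 3)) = 0 := by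
      rw [det2_add_right]
      have e1 := hE k
      have e2 := hD k
      rw [det2_swap (tang2 r (k + 2)) (tang2 r k), e1, e2]
      ring
    have hc : det2 (tang2 r (k + 1)) (tang2 r (k + 2)) ≠ 0 := by
      have := hd (k + 1)
      rwa [show k + 1 + 1 = k + 2 from by ring] at this
    have hs := det2_cramer hc h1 h2
    have : tang2 r k + tang2 r (k + 3) = 0 := hs
    exact eq_neg_of_add_eq_zero_right this
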